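/- In the general CSR framework with unit caches, suppose there are exactly two objects (|𝒪| = 2), the node preference relations are induced by a symmetric cost function d on V (d(i,j) = d(j,i), d(i,i) = 0 ≤ d(i,j)) via: j ⊵_i k iff d(i,j) ≤ d(i,k), every utility preference relation ⪰_i satisfies Monotonicity and Consistency, and there is a server node for each object. Then an equilibrium exists: there is an admissible placement P such that no non-server node i has an object β with P[i ↦ β] ≻_i P. -/

import Mathlib

/-- `j` is a most `i`-preferred holder of `α` in `P_{-i}` (node preferences are
induced by the cost function `d`: `j ⊵_i k` iff `d i j ≤ d i k`). -/
def MostPrefHolder {V O : Type*} (d : V → V → ℝ) (i : V) (α : O) (P : V → O) (j : V) : Prop :=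
  j ≠ i ∧ P j = α ∧ ∀ k, k ≠ i → P k = α → d i j ≤ d i k

/-- Strict part of the utility preference relation `upref i`. -/
def UStrict {V O : Type*} (upref : V → (V → O) → (V → O) → Prop)
    (i : V) (P Q : V → O) : Prop :=
  upref i P Q ∧ ¬ upref i Q P

private lemma twoObjFacts {O : Type*} {a b : O} {opp : O → O} (hab : a ≠ b)
    (hall : ∀ o, o = a ∨ o = b) (ha : opp a = b) (hb : opp b = a) :
    (∀ o, opp o ≠ o) ∧ (∀ o, opp (opp o) = o) ∧ (∀ o o' : O, o' ≠ o → o' = opp o) := by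
  refine ⟨?_, ?_, ?_⟩
  · intro o
    rcases hall o with h | h <;> subst h
    · rw [ha]; exact hab.symm
    · rw [hb]; exact hab
  · intro o
    rcases hall o with h | h <;> subst h
    · rw [ha, hb]
    · rw [hb, ha]
  · intro o o' hne
    rcases hall o with ho | ho <;> rcases hall o' with ho' | ho' <;> subst ho <;> subst ho'
    · exact absurd rfl hne
    · rw [ha]
    · rw [hb]
    · exact absurd rfl hne

private lemma csrPass_dec {V : Type*} [Fintype V] (θ : V → ℝ) (idx : V → ℕ) {z j : V}
    (hj : θ j < θ z ∨ (θ j = θ z ∧ idx j < idx z)) :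
    (Finset.univ.filter fun y => θ y < θ j ∨ (θ y = θ j ∧ idx y < idx j)).card <
    (Finset.univ.filter fun y => θ y < θ z ∨ (θ y = θ z ∧ idx y < idx z)).card := by
  apply Finset.card_lt_card
  rw [Finset.ssubset_iff_of_subset]
  · exact ⟨j, by simpa using hj, by simp⟩
  · intro y hy
    simp only [Finset.mem_filter, Finset.mem_univ, true_and] at *
    rcases hy with h1 | ⟨h1, h2⟩ <;> rcases hj with g1 | ⟨g1, g2⟩
    · exact Or.inl (lt_trans h1 g1)
    · exact Or.inl (g1 ▸ h1)
    · exact Or.inl (h1 ▸ g1)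
    · exact Or.inr ⟨h1.trans g1, lt_trans h2 g2⟩

/-- Canonical placement: every node holds `c` except `j`, which holds `oppc c`. -/
def csrPlc {V O : Type*} [DecidableEq V] (oppc : O → O) (c : O) (j : V) : V → O :=
  fun k => if k = j then oppc c else c

open scoped Classical in
/-- Single-pass coloring recursion: process nodes in increasing `(θ, idx)` order;
a (non-server) node keeps its `home` color iff it is covered at its turn. -/
noncomputable def csrPass {V O : Type*} [Fintype V] (θ : V → ℝ) (idx : V → ℕ)
    (serv : V → Option O) (home flip : V → O) (covby : V → V → O → Prop) (z : V) : O :=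
  (serv z).getD
    (if ∃ j, covby z j (if _h : θ j < θ z ∨ (θ j = θ z ∧ idx j < idx z)
        then csrPass θ idx serv home flip covby j
        else (serv j).getD (home j))
     then home z else flip z)
termination_by (Finset.univ.filter fun j => θ j < θ z ∨ (θ j = θ z ∧ idx j < idx z)).card
decreasing_by all_goals exact csrPass_dec θ idx (by assumption)

theorem two_object_undirected_axiomatic_csr_has_equilibrium
    {V O : Type*} [Fintype V] [Fintype O] [Nonempty V] [Nonempty O] [DecidableEq V]
    (d : V → V → ℝ)
    (hd_diag : ∀ i, d i i = 0) (hd_nonneg : ∀ i j, 0 ≤ d i j)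
    (hsym : ∀ i j, d i j = d j i)
    (hcard : Fintype.card O = 2)
    (upref : V → (V → O) → (V → O) → Prop)
    (hrefl : ∀ i P, upref i P P)
    (htotal : ∀ i P Q, upref i P Q ∨ upref i Q P)
    (htrans : ∀ i P Q R, upref i P Q → upref i Q R → upref i P R)
    (hmono : ∀ (i : V) (P Q : V → O),
      (∀ (α : O) (q : V), Q q = α → ∃ p, P p = α ∧ d i p ≤ d i q) → upref i P Q)
    (hcons : ∀ (i : V) (P Q : V → O),
      (∀ α : O, (α = P i ∨ α = Q i) → ∀ p q : V,
        MostPrefHolder d i α P p → MostPrefHolder d i α Q q → d i p = d i q) →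
      UStrict upref i P (Function.update P i (Q i)) →
      upref i (Function.update Q i (P i)) Q)
    (s : O → V) (hs : Function.Injective s) :
    ∃ P : V → O, (∀ α, P (s α) = α) ∧
      ∀ i : V, i ∉ Set.range s → ∀ β : O,
        ¬ UStrict upref i (Function.update P i β) P := by
  classical
  -- two objects
  have hcard' : Nat.card O = 2 := by rw [Nat.card_eq_fintype_card]; exact hcard
  obtain ⟨a, b, hab, hUniv⟩ := Nat.card_eq_two_iff.mp hcard'
  have hall : ∀ o : O, o = a ∨ o = b := by
    intro o
    have : o ∈ ({a, b} : Set O) := hUniv ▸ Set.mem_univ o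
    simpa using this
  set opp : O → O := fun o => if o = a then b else a with hopp_def
  have hoppa : opp a = b := if_pos rfl
  have hoppb : opp b = a := if_neg (Ne.symm hab)
  obtain ⟨hopp_ne, hopp_opp, hopp_other⟩ := twoObjFacts hab hall hoppa hoppb
  -- servers are distinct, so every node has another node
  have hsab : s a ≠ s b := fun h => hab (hs h)
  have hnear : ∀ z : V, ∃ j, j ≠ z ∧ ∀ k, k ≠ z → d z j ≤ d z k := by
    intro z
    have hne : (Finset.univ.erase z).Nonempty := by
      rcases eq_or_ne (s a) z with h | h
      · exact ⟨s b, Finset.mem_erase.mpr ⟨h ▸ hsab.symm, Finset.mem_univ _⟩⟩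
      · exact ⟨s a, Finset.mem_erase.mpr ⟨h, Finset.mem_univ _⟩⟩
    obtain ⟨j, hj, hmin⟩ := Finset.exists_min_image _ (d z) hne
    exact ⟨j, (Finset.mem_erase.mp hj).1,
      fun k hk => hmin k (Finset.mem_erase.mpr ⟨hk, Finset.mem_univ _⟩)⟩
  choose n hn_ne hn_min using hnear
  -- monotonicity of canonical placements
  have relMono : ∀ (z : V) (c : O) (j j' : V), j ≠ z → d z j ≤ d z j' →
      upref z (csrPlc opp c j) (csrPlc opp c j') := by
    intro z c j j' hjz hle
    apply hmono
    intro o q hq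
    by_cases hq' : q = j'
    · subst hq'
      refine ⟨j, ?_, hle⟩
      rw [csrPlc, if_pos rfl] at hq
      rw [csrPlc, if_pos rfl]
      exact hq
    · refine ⟨z, ?_, by rw [hd_diag]; exact hd_nonneg z q⟩
      rw [csrPlc, if_neg hq'] at hq
      rw [csrPlc, if_neg hjz.symm]
      exact hq
  -- home colors
  have hhome' : ∀ z : V, ∃ hz : O,
      upref z (csrPlc opp hz (n z)) (csrPlc opp (opp hz) (n z)) := by
    intro z
    rcases htotal z (csrPlc opp a (n z)) (csrPlc opp b (n z)) with h | h
    · exact ⟨a, by rwa [hoppa]⟩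
    · exact ⟨b, by rwa [hoppb]⟩
  choose home hhome using hhome'
  -- thresholds
  have hθ' : ∀ z : V, ∃ t : ℝ, d z (n z) ≤ t ∧
      (∀ j, j ≠ z → d z j ≤ t →
        upref z (csrPlc opp (home z) j) (csrPlc opp (opp (home z)) (n z))) ∧
      (∀ j, j ≠ z →
        upref z (csrPlc opp (home z) j) (csrPlc opp (opp (home z)) (n z)) → d z j ≤ t) := by
    intro z
    set S : Finset V := (Finset.univ.erase z).filter
      (fun j => upref z (csrPlc opp (home z) j) (csrPlc opp (opp (home z)) (n z))) with hS
    have hnS : n z ∈ S := by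
      rw [hS, Finset.mem_filter]
      exact ⟨Finset.mem_erase.mpr ⟨hn_ne z, Finset.mem_univ _⟩, hhome z⟩
    obtain ⟨j', hj'S, hj'max⟩ := Finset.exists_max_image S (d z) ⟨_, hnS⟩
    have hj'S' := hj'S
    rw [hS, Finset.mem_filter, Finset.mem_erase] at hj'S'
    refine ⟨d z j', hj'max _ hnS, ?_, ?_⟩
    · intro j hj hdle
      exact htrans z _ _ _ (relMono z (home z) j j' hj hdle) hj'S'.2
    · intro j hj hu
      refine hj'max j ?_
      rw [hS, Finset.mem_filter, Finset.mem_erase]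
      exact ⟨⟨hj, Finset.mem_univ _⟩, hu⟩
  choose θ hθn hθdown hθup using hθ'
  -- servers as an Option-valued function
  set serv : V → Option O := fun x => if h : ∃ o, s o = x then some h.choose else none
    with hserv_def
  have hserv_s : ∀ o, serv (s o) = some o := by
    intro o
    have hex : ∃ o', s o' = s o := ⟨o, rfl⟩
    have h1 : serv (s o) = some hex.choose := by rw [hserv_def]; exact dif_pos hex
    rw [h1, hs hex.choose_spec]
  have hserv_none : ∀ z, z ∉ Set.range s → serv z = none := by
    intro z hz
    rw [hserv_def]
    exact dif_neg (fun ⟨o, ho⟩ => hz ⟨o, ho⟩)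
  set idx : V → ℕ := fun v => ((Fintype.equivFin V) v : ℕ) with hidx_def
  have hidx_inj : ∀ {u v : V}, idx u = idx v → u = v := by
    intro u v h
    exact (Fintype.equivFin V).injective (Fin.val_injective h)
  -- the final placement
  set P : V → O := csrPass θ idx serv home (fun z => opp (home z))
      (fun z j c => j ≠ z ∧ d z j ≤ θ z ∧ c = opp (home z)) with hP_def
  have hPeq : ∀ z : V, P z = (serv z).getD
      (if ∃ j, j ≠ z ∧ d z j ≤ θ z ∧
          (if θ j < θ z ∨ (θ j = θ z ∧ idx j < idx z)
            then P j else (serv j).getD (home j)) = opp (home z)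
        then home z else opp (home z)) := by
    intro z
    rw [hP_def]
    rw [csrPass]
    exact congrArg (Option.getD _) (ite_congr rfl (fun _ => rfl) (fun _ => rfl))
  have hPs : ∀ o, P (s o) = o := by
    intro o
    rw [hPeq, hserv_s]
    rfl
  -- order helpers
  have hprec_flip : ∀ j z : V, j ≠ z →
      ¬(θ j < θ z ∨ (θ j = θ z ∧ idx j < idx z)) →
      (θ z < θ j ∨ (θ z = θ j ∧ idx z < idx j)) := by
    intro j z hne h
    push_neg at h
    rcases lt_trichotomy (θ z) (θ j) with h1 | h1 | h1
    · exact Or.inl h1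
    · refine Or.inr ⟨h1, ?_⟩
      have h2 := h.2 h1.symm
      rcases Nat.lt_trichotomy (idx z) (idx j) with h3 | h3 | h3
      · exact h3
      · exact absurd (hidx_inj h3) (Ne.symm hne)
      · exact absurd h3 (not_lt.mpr h2)
    · exact absurd h1 (not_lt.mpr h.1)
  have hprec_le : ∀ j z : V, ¬(θ j < θ z ∨ (θ j = θ z ∧ idx j < idx z)) → θ z ≤ θ j := by
    intro j z h
    push_neg at h
    exact h.1
  -- the main structural dichotomy
  have hmain : ∀ z : V, z ∉ Set.range s →
      ((∃ j, j ≠ z ∧ d z j ≤ θ z ∧ P j = opp (home z)) ∧ P z = home z) ∨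
      ((∀ j, j ≠ z → d z j ≤ θ z → P j ≠ opp (home z)) ∧ P z = opp (home z)) := by
    intro z hz
    have hsz := hserv_none z hz
    by_cases hC : ∃ j, j ≠ z ∧ d z j ≤ θ z ∧
        (if θ j < θ z ∨ (θ j = θ z ∧ idx j < idx z)
          then P j else (serv j).getD (home j)) = opp (home z)
    · -- covered: z stays home
      have hPz : P z = home z := by
        rw [hPeq z, hsz, Option.getD_none, if_pos hC]
      obtain ⟨j, hjz, hjd, hjc⟩ := hC
      refine Or.inl ⟨⟨j, hjz, hjd, ?_⟩, hPz⟩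
      by_cases hp : θ j < θ z ∨ (θ j = θ z ∧ idx j < idx z)
      · rw [if_pos hp] at hjc; exact hjc
      · rw [if_neg hp] at hjc
        cases hsj : serv j with
        | some o =>
          have hPj : P j = o := by rw [hPeq j, hsj]; rfl
          rw [hsj, Option.getD_some] at hjc
          rw [hPj]; exact hjc
        | none =>
          rw [hsj, Option.getD_none] at hjc
          -- hjc : home j = opp (home z); show z covers j, so P j = home j
          have hCj : ∃ k, k ≠ j ∧ d j k ≤ θ j ∧
              (if θ k < θ j ∨ (θ k = θ j ∧ idx k < idx j)
                then P k else (serv k).getD (home k)) = opp (home j) := by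
            refine ⟨z, Ne.symm hjz, ?_, ?_⟩
            · rw [hsym j z]; exact le_trans hjd (hprec_le j z hp)
            · rw [if_pos (hprec_flip j z hjz hp), hPz, hjc, hopp_opp]
          have hPj : P j = home j := by
            rw [hPeq j, hsj, Option.getD_none, if_pos hCj]
          rw [hPj, hjc]
    · -- uncovered: z flips
      have hPz : P z = opp (home z) := by
        rw [hPeq z, hsz, Option.getD_none, if_neg hC]
      refine Or.inr ⟨?_, hPz⟩
      intro j hjz hjd hPj
      apply hC
      refine ⟨j, hjz, hjd, ?_⟩
      by_cases hp : θ j < θ z ∨ (θ j = θ z ∧ idx j < idx z)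
      · rw [if_pos hp]; exact hPj
      · rw [if_neg hp]
        cases hsj : serv j with
        | some o =>
          have hPj' : P j = o := by rw [hPeq j, hsj]; rfl
          rw [Option.getD_some, ← hPj']
          exact hPj
        | none =>
          rw [Option.getD_none]
          by_contra hhj
          -- then home j = home z, z covers j, so P j = home j = home z; contra
          have hhj2 : home j = home z := by
            have h2 := hopp_other (opp (home z)) (home j) hhj
            rwa [hopp_opp] at h2
          have hCj : ∃ k, k ≠ j ∧ d j k ≤ θ j ∧
              (if θ k < θ j ∨ (θ k = θ j ∧ idx k < idx j)
                then P k else (serv k).getD (home k)) = opp (home j) := by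
            refine ⟨z, Ne.symm hjz, ?_, ?_⟩
            · rw [hsym j z]; exact le_trans hjd (hprec_le j z hp)
            · rw [if_pos (hprec_flip j z hjz hp), hPz, hhj2]
          have hPj2 : P j = home j := by
            rw [hPeq j, hsj, Option.getD_none, if_pos hCj]
          rw [hPj2, hhj2] at hPj
          exact hopp_ne (home z) hPj.symm
  -- happiness
  refine ⟨P, hPs, ?_⟩
  intro z hz β hUS
  apply hUS.2
  by_cases hβ : β = P z
  · rw [hβ, Function.update_eq_self]
    exact hrefl z P
  have hβ' : β = opp (P z) := hopp_other _ _ hβ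
  -- L1 : P dominates the canonical placement (P z, j) for an opposite-colored j
  have hL1 : ∀ j, j ≠ z → P j = opp (P z) → upref z P (csrPlc opp (P z) j) := by
    intro j hjz hPj
    apply hmono
    intro o q hq
    by_cases hq' : q = j
    · subst hq'
      rw [csrPlc, if_pos rfl] at hq
      exact ⟨q, hq ▸ hPj, le_refl _⟩
    · rw [csrPlc, if_neg hq'] at hq
      exact ⟨z, hq, by rw [hd_diag]; exact hd_nonneg z q⟩
  -- L2 : canonical placement (β, ja) dominates the deviation, for nearest same ja
  have hL2 : ∀ j, j ≠ z → P j = P z → (∀ k, k ≠ z → P k = P z → d z j ≤ d z k) →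
      upref z (csrPlc opp β j) (Function.update P z β) := by
    intro ja hjaz hPja hjamin
    apply hmono
    intro o q hq
    by_cases hq' : q = z
    · subst hq'
      rw [Function.update_self] at hq
      refine ⟨q, ?_, le_refl _⟩
      rw [csrPlc, if_neg hjaz.symm]
      exact hq
    · rw [Function.update_of_ne hq'] at hq
      by_cases hq2 : P q = P z
      · refine ⟨ja, ?_, hjamin q hq' hq2⟩
        rw [csrPlc, if_pos rfl, ← hq, hq2, hβ', hopp_opp]
      · refine ⟨q, ?_, le_refl _⟩
        have hqβ : P q = β := by
          rw [hβ']; exact hopp_other _ _ hq2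
        have hqja : q ≠ ja := fun h => hq2 (h ▸ hPja)
        rw [csrPlc, if_neg hqja, ← hq, hqβ]
  rcases hmain z hz with ⟨⟨jw, hjwz, hjwd, hjwP⟩, hPz⟩ | ⟨hnone, hPz⟩
  · -- STAY case: P z = home z
    obtain ⟨jb, hjb_mem, hjb_min⟩ := Finset.exists_min_image
      ((Finset.univ.erase z).filter (fun j => P j = opp (home z))) (d z)
      ⟨jw, by rw [Finset.mem_filter, Finset.mem_erase]
              exact ⟨⟨hjwz, Finset.mem_univ _⟩, hjwP⟩⟩
    rw [Finset.mem_filter, Finset.mem_erase] at hjb_mem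
    obtain ⟨ja, hja_mem, hja_min⟩ := Finset.exists_min_image
      ((Finset.univ.erase z).filter (fun j => P j = P z)) (d z)
      ⟨s (home z), by
        rw [Finset.mem_filter, Finset.mem_erase]
        exact ⟨⟨fun h => hz ⟨home z, h⟩, Finset.mem_univ _⟩, by rw [hPs, hPz]⟩⟩
    rw [Finset.mem_filter, Finset.mem_erase] at hja_mem
    have hjamin' : ∀ k, k ≠ z → P k = P z → d z ja ≤ d z k := by
      intro k hk hPk
      refine hja_min k ?_
      rw [Finset.mem_filter, Finset.mem_erase]
      exact ⟨⟨hk, Finset.mem_univ _⟩, hPk⟩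
    have u1 : upref z P (csrPlc opp (P z) jb) :=
      hL1 jb hjb_mem.1.1 (by rw [hjb_mem.2, hPz])
    have u2 : upref z (csrPlc opp (P z) jb) (csrPlc opp β ja) := by
      have hd1 : d z jb ≤ θ z := le_trans
        (hjb_min jw (by rw [Finset.mem_filter, Finset.mem_erase]
                        exact ⟨⟨hjwz, Finset.mem_univ _⟩, hjwP⟩)) hjwd
      have s1 : upref z (csrPlc opp (home z) jb) (csrPlc opp (opp (home z)) (n z)) :=
        hθdown z jb hjb_mem.1.1 hd1
      have s2 : upref z (csrPlc opp (opp (home z)) (n z)) (csrPlc opp (opp (home z)) ja) :=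
        relMono z (opp (home z)) (n z) ja (hn_ne z) (hn_min z ja hja_mem.1.1)
      have h3 := htrans z _ _ _ s1 s2
      rw [hPz, hβ', hPz]
      exact h3
    have u3 : upref z (csrPlc opp β ja) (Function.update P z β) :=
      hL2 ja hja_mem.1.1 hja_mem.2 hjamin'
    exact htrans z _ _ _ (htrans z _ _ _ u1 u2) u3
  · -- FLIP case: P z = opp (home z)
    have hnz : P (n z) = home z := by
      by_contra hne
      exact hnone (n z) (hn_ne z) (hθn z) (hopp_other (home z) (P (n z)) hne)
    have hoppPz : opp (P z) = home z := by rw [hPz, hopp_opp]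
    obtain ⟨ja, hja_mem, hja_min⟩ := Finset.exists_min_image
      ((Finset.univ.erase z).filter (fun j => P j = P z)) (d z)
      ⟨s (opp (home z)), by
        rw [Finset.mem_filter, Finset.mem_erase]
        exact ⟨⟨fun h => hz ⟨opp (home z), h⟩, Finset.mem_univ _⟩, by rw [hPs, hPz]⟩⟩
    rw [Finset.mem_filter, Finset.mem_erase] at hja_mem
    have hjamin' : ∀ k, k ≠ z → P k = P z → d z ja ≤ d z k := by
      intro k hk hPk
      refine hja_min k ?_
      rw [Finset.mem_filter, Finset.mem_erase]
      exact ⟨⟨hk, Finset.mem_univ _⟩, hPk⟩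
    have u1 : upref z P (csrPlc opp (P z) (n z)) :=
      hL1 (n z) (hn_ne z) (by rw [hnz, hoppPz])
    have u2 : upref z (csrPlc opp (P z) (n z)) (csrPlc opp β ja) := by
      rcases htotal z (csrPlc opp (P z) (n z)) (csrPlc opp β ja) with h | h
      · exact h
      · exfalso
        have hβhome : β = home z := by rw [hβ', hoppPz]
        rw [hβhome, hPz] at h
        have hdja : d z ja ≤ θ z := hθup z ja hja_mem.1.1 h
        exact hnone ja hja_mem.1.1 hdja (by rw [hja_mem.2, hPz])
    have u3 : upref z (csrPlc opp β ja) (Function.update P z β) :=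
      hL2 ja hja_mem.1.1 hja_mem.2 hjamin'
    exact htrans z _ _ _ (htrans z _ _ _ u1 u2) u3
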